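/- Let 0 < R ≤ 1 and set A := {w ∈ ℂ : 0 < |w| < R}. Let g : ℂ → ℝ be continuous and strictly positive on A, and assume that log ∘ g satisfies the circle sub-mean value inequality on A: for every a ∈ A and every r > 0 with the closed disc of center a and radius r contained in A, log g(a) ≤ (2π)⁻¹ ∫₀^{2π} log g(a + r·e^{iθ}) dθ. Assume moreover that w ↦ g(w)/|w|² is Lebesgue-integrable on A. Then for every z with 0 < |z| ≤ R/5 one has g(z) ≤ (9/π) ∫_A g(w)/|w|² dλ(w), where λ denotes the Lebesgue measure on ℂ. -/

import Mathlib

open MeasureTheory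

open scoped Real

/-- Jensen step: from the sub-mean value inequality for `log ∘ g` on a circle,
deduce the sub-mean value inequality for `g` itself. -/
lemma jensen_circle_step (g : ℂ → ℝ) (A : Set ℂ) (hcont : ContinuousOn g A)
    (hpos : ∀ w ∈ A, 0 < g w) (z : ℂ) (r : ℝ)
    (hmem : ∀ θ : ℝ, z + r * Complex.exp (θ * Complex.I) ∈ A) (hzA : z ∈ A)
    (hlog : Real.log (g z) ≤ (2 * Real.pi)⁻¹ *
        ∫ θ in (0:ℝ)..(2 * Real.pi),
          Real.log (g (z + r * Complex.exp (θ * Complex.I)))) :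
    g z ≤ (2 * Real.pi)⁻¹ *
      ∫ θ in (0:ℝ)..(2 * Real.pi), g (z + r * Complex.exp (θ * Complex.I)) := by
  set c : ℝ → ℂ := fun θ => z + r * Complex.exp (θ * Complex.I) with hc_def
  have hc : Continuous c := by
    apply continuous_const.add
    exact continuous_const.mul
      (Complex.continuous_exp.comp (Complex.continuous_ofReal.mul continuous_const))
  have hψ : Continuous (fun θ => g (c θ)) := hcont.comp_continuous hc hmem
  have hψpos : ∀ θ, 0 < g (c θ) := fun θ => hpos _ (hmem θ)
  have hφ : Continuous (fun θ => Real.log (g (c θ))) :=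
    hψ.log fun θ => (hψpos θ).ne'
  set μ : Measure ℝ := volume.restrict (Set.Ioc (0:ℝ) (2 * Real.pi)) with hμ_def
  have h2π : (0:ℝ) < 2 * Real.pi := by positivity
  have hμuniv : μ Set.univ = ENNReal.ofReal (2 * Real.pi) := by
    rw [hμ_def, Measure.restrict_apply MeasurableSet.univ, Set.univ_inter,
      Real.volume_Ioc, sub_zero]
  haveI : IsFiniteMeasure μ := ⟨by rw [hμuniv]; exact ENNReal.ofReal_lt_top⟩
  haveI : NeZero μ := by
    refine ⟨fun h => ?_⟩
    rw [h] at hμuniv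
    simp only [Measure.coe_zero, Pi.zero_apply] at hμuniv
    exact (ENNReal.ofReal_pos.2 h2π).ne' hμuniv.symm
  have havg : ∀ h : ℝ → ℝ, (⨍ θ, h θ ∂μ)
      = (2 * Real.pi)⁻¹ * ∫ θ in (0:ℝ)..(2 * Real.pi), h θ := by
    intro h
    rw [average_eq, measureReal_def, hμuniv, ENNReal.toReal_ofReal h2π.le, smul_eq_mul,
      intervalIntegral.integral_of_le h2π.le]
  have hfi : Integrable (fun θ => Real.log (g (c θ))) μ := hφ.integrableOn_Ioc
  have hgi0 : Integrable (fun θ => g (c θ)) μ := hψ.integrableOn_Ioc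
  have hexplog : (fun θ => Real.exp (Real.log (g (c θ)))) = fun θ => g (c θ) :=
    funext fun θ => Real.exp_log (hψpos θ)
  have hgi : Integrable (fun θ => Real.exp (Real.log (g (c θ)))) μ := by
    rw [hexplog]; exact hgi0
  have jensen := convexOn_exp.map_average_le Real.continuous_exp.continuousOn
    isClosed_univ (Filter.Eventually.of_forall fun x => Set.mem_univ _) hfi hgi
  have key : Real.exp (⨍ θ, Real.log (g (c θ)) ∂μ) ≤ ⨍ θ, g (c θ) ∂μ := by
    refine jensen.trans_eq ?_
    refine average_congr (Filter.Eventually.of_forall fun θ => ?_)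
    exact Real.exp_log (hψpos θ)
  calc g z = Real.exp (Real.log (g z)) := (Real.exp_log (hpos z hzA)).symm
    _ ≤ Real.exp (⨍ θ, Real.log (g (c θ)) ∂μ) := by
        apply Real.exp_le_exp.2
        rw [havg]
        exact hlog
    _ ≤ ⨍ θ, g (c θ) ∂μ := key
    _ = (2 * Real.pi)⁻¹ * ∫ θ in (0:ℝ)..(2 * Real.pi), g (c θ) := havg _

lemma polarCoord_symm_eq_exp (p : ℝ × ℝ) :
    Complex.polarCoord.symm p = p.1 * Complex.exp (p.2 * Complex.I) := by
  rw [Complex.polarCoord_symm_apply, Complex.exp_mul_I]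
  simp [← Complex.ofReal_cos, ← Complex.ofReal_sin]

/-- The key estimate in the proof of Lemma 7.2: if `g` is continuous and
positive on the punctured disc `0 < |w| < R`, `log ∘ g` satisfies the circle
sub-mean value inequality there, and `g(w)/|w|²` is Lebesgue-integrable, then
`g(z) ≤ (9/π) ∫ g(w)/|w|² dλ(w)` for `0 < |z| ≤ R/5`. -/
theorem log_subharmonic_pointwise_bound (R : ℝ) (hR0 : 0 < R) (hR1 : R ≤ 1)
    (g : ℂ → ℝ)
    (hcont : ContinuousOn g {w : ℂ | 0 < ‖w‖ ∧ ‖w‖ < R})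
    (hpos : ∀ w : ℂ, 0 < ‖w‖ → ‖w‖ < R → 0 < g w)
    (hsub : ∀ a : ℂ, 0 < ‖a‖ → ‖a‖ < R → ∀ r : ℝ, 0 < r →
      Metric.closedBall a r ⊆ {w : ℂ | 0 < ‖w‖ ∧ ‖w‖ < R} →
      Real.log (g a) ≤ (2 * Real.pi)⁻¹ *
        ∫ θ in (0:ℝ)..(2 * Real.pi),
          Real.log (g (a + r * Complex.exp (θ * Complex.I))))
    (hint : IntegrableOn (fun w : ℂ => g w / ‖w‖ ^ 2)
      {w : ℂ | 0 < ‖w‖ ∧ ‖w‖ < R}) :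
    ∀ z : ℂ, 0 < ‖z‖ → ‖z‖ ≤ R / 5 →
      g z ≤ (9 / Real.pi) *
        ∫ w in {w : ℂ | 0 < ‖w‖ ∧ ‖w‖ < R},
          g w / ‖w‖ ^ 2 := by
  intro z hz0 hz5
  set A : Set ℂ := {w : ℂ | 0 < ‖w‖ ∧ ‖w‖ < R} with hA_def
  set ρ : ℝ := ‖z‖ / 2 with hρ_def
  have hρpos : 0 < ρ := by positivity
  have hzR : ‖z‖ < R := lt_of_le_of_lt hz5 (by linarith)
  have hzA : z ∈ A := ⟨hz0, hzR⟩
  have h3ρ : 3 * ρ < R := by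
    rw [hρ_def]; nlinarith
  -- bounds on the closed ball
  have hcb_bounds : ∀ w ∈ Metric.closedBall z ρ,
      ρ ≤ ‖w‖ ∧ ‖w‖ ≤ 3 * ρ := by
    intro w hw
    rw [Metric.mem_closedBall, Complex.dist_eq] at hw
    have h1 : ‖z‖ - ‖w‖ ≤ ‖(w - z)‖ := by
      rw [← norm_sub_rev]
      exact norm_sub_norm_le z w
    have h2 : ‖w‖ ≤ ‖z‖ + ‖(w - z)‖ := by
      simpa using norm_add_le z (w - z)
    constructor
    · rw [hρ_def] at *; linarith
    · rw [hρ_def] at *; linarith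
  have hball : Metric.closedBall z ρ ⊆ A := by
    intro w hw
    obtain ⟨hlo, hhi⟩ := hcb_bounds w hw
    exact ⟨lt_of_lt_of_le hρpos hlo, lt_of_le_of_lt (by linarith) h3ρ⟩
  -- Jensen step for each radius r ∈ (0, ρ]
  have key : ∀ r : ℝ, 0 < r → r ≤ ρ →
      2 * Real.pi * g z ≤
        ∫ θ in (0:ℝ)..(2 * Real.pi), g (z + r * Complex.exp (θ * Complex.I)) := by
    intro r hr hrρ
    have hmem : ∀ θ : ℝ, z + r * Complex.exp (θ * Complex.I) ∈ A := by
      intro θ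
      apply hball
      rw [Metric.mem_closedBall, Complex.dist_eq]
      have : z + ↑r * Complex.exp (↑θ * Complex.I) - z
          = ↑r * Complex.exp (↑θ * Complex.I) := by ring
      rw [this, norm_mul, Complex.norm_exp_ofReal_mul_I, mul_one, Complex.norm_real, Real.norm_eq_abs,
        abs_of_pos hr]
      exact hrρ
    have hsubr : Metric.closedBall z r ⊆ A :=
      fun w hw => hball (Metric.closedBall_subset_closedBall hrρ hw)
    have hj := jensen_circle_step g A hcont (fun w hw => hpos w hw.1 hw.2) z r hmem hzA
      (hsub z hz0 hzR r hr hsubr)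
    have h2π : (0:ℝ) < 2 * Real.pi := by positivity
    calc 2 * Real.pi * g z
        ≤ 2 * Real.pi * ((2 * Real.pi)⁻¹ *
            ∫ θ in (0:ℝ)..(2 * Real.pi), g (z + r * Complex.exp (θ * Complex.I))) :=
          by exact mul_le_mul_of_nonneg_left hj h2π.le
      _ = ∫ θ in (0:ℝ)..(2 * Real.pi), g (z + r * Complex.exp (θ * Complex.I)) := by
          rw [← mul_assoc, mul_inv_cancel₀ h2π.ne', one_mul]
  -- polar coordinates: area mean value inequality
  have hπ := Real.pi_pos
  have hgint_cb : IntegrableOn g (Metric.closedBall z ρ) :=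
    (hcont.mono hball).integrableOn_compact (isCompact_closedBall z ρ)
  have polar : Real.pi * ρ ^ 2 * g z ≤ ∫ w in Metric.closedBall z ρ, g w := by
    set f : ℂ → ℝ := (Metric.closedBall (0:ℂ) ρ).indicator (fun w => g (z + w)) with hf_def
    -- translate
    have e1 : ∫ w in Metric.closedBall z ρ, g w = ∫ w, f w := by
      have h1 : ∀ w : ℂ, f w = (Metric.closedBall z ρ).indicator g (z + w) := by
        intro w
        have hmemiff : z + w ∈ Metric.closedBall z ρ ↔ w ∈ Metric.closedBall (0:ℂ) ρ := by
          simp [Metric.mem_closedBall, Complex.dist_eq]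
        by_cases hw : w ∈ Metric.closedBall (0:ℂ) ρ
        · rw [hf_def, Set.indicator_of_mem hw, Set.indicator_of_mem (hmemiff.2 hw)]
        · rw [hf_def, Set.indicator_of_notMem hw,
            Set.indicator_of_notMem (fun h => hw (hmemiff.1 h))]
      calc ∫ w in Metric.closedBall z ρ, g w
          = ∫ w, (Metric.closedBall z ρ).indicator g w := by
            rw [integral_indicator (measurableSet_closedBall)]
        _ = ∫ w, (Metric.closedBall z ρ).indicator g (z + w) :=
            (integral_add_left_eq_self _ z).symm
        _ = ∫ w, f w := by simp_rw [h1]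
    -- polar change of variables
    have e2 := Complex.integral_comp_polarCoord_symm f
    have hSmeas : MeasurableSet {p : ℝ × ℝ | |p.1| ≤ ρ} :=
      measurableSet_le (measurable_fst.abs) measurable_const
    have e3 : ∀ p : ℝ × ℝ, p.1 • f (Complex.polarCoord.symm p)
        = Set.indicator {p : ℝ × ℝ | |p.1| ≤ ρ}
          (fun p => p.1 * g (z + ↑p.1 * Complex.exp (↑p.2 * Complex.I))) p := by
      intro p
      have habs : ‖(Complex.polarCoord.symm p)‖ = |p.1| :=
        Complex.norm_polarCoord_symm p
      have hmemiff : Complex.polarCoord.symm p ∈ Metric.closedBall (0:ℂ) ρ ↔ |p.1| ≤ ρ := by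
        rw [Metric.mem_closedBall, Complex.dist_eq, sub_zero, habs]
      by_cases hp : |p.1| ≤ ρ
      · have hp' : p ∈ {p : ℝ × ℝ | |p.1| ≤ ρ} := hp
        rw [Set.indicator_of_mem hp', hf_def, Set.indicator_of_mem (hmemiff.2 hp),
          polarCoord_symm_eq_exp, smul_eq_mul]
      · have hp' : p ∉ {p : ℝ × ℝ | |p.1| ≤ ρ} := hp
        rw [Set.indicator_of_notMem hp', hf_def,
          Set.indicator_of_notMem (fun h => hp (hmemiff.1 h)), smul_zero]
    have e4 : (∫ p in polarCoord.target, p.1 • f (Complex.polarCoord.symm p))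
        = ∫ p in polarCoord.target ∩ {p : ℝ × ℝ | |p.1| ≤ ρ},
            p.1 * g (z + ↑p.1 * Complex.exp (↑p.2 * Complex.I)) := by
      simp_rw [e3]
      rw [setIntegral_indicator hSmeas]
    have hseteq : polarCoord.target ∩ {p : ℝ × ℝ | |p.1| ≤ ρ}
        = Set.Ioc 0 ρ ×ˢ Set.Ioo (-Real.pi) Real.pi := by
      rw [polarCoord_target]
      ext p
      simp only [Set.mem_inter_iff, Set.mem_prod, Set.mem_Ioi, Set.mem_Ioo, Set.mem_setOf_eq,
        Set.mem_Ioc]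
      constructor
      · rintro ⟨⟨h1, h2⟩, h3⟩
        exact ⟨⟨h1, (abs_of_pos h1 ▸ h3)⟩, h2⟩
      · rintro ⟨⟨h1, h2⟩, h3⟩
        exact ⟨⟨h1, h3⟩, by rwa [abs_of_pos h1]⟩
    -- integrability of the polar integrand
    set F : ℝ × ℝ → ℝ := fun p => p.1 * g (z + ↑p.1 * Complex.exp (↑p.2 * Complex.I))
      with hF_def
    have hm : Continuous fun p : ℝ × ℝ => z + ↑p.1 * Complex.exp (↑p.2 * Complex.I) := by
      apply continuous_const.add
      exact (Complex.continuous_ofReal.comp continuous_fst).mul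
        (Complex.continuous_exp.comp
          ((Complex.continuous_ofReal.comp continuous_snd).mul continuous_const))
    have hmapsto : ∀ p ∈ Set.Icc (0:ℝ) ρ ×ˢ Set.Icc (-Real.pi) Real.pi,
        z + ↑p.1 * Complex.exp (↑p.2 * Complex.I) ∈ A := by
      rintro p ⟨⟨h0, h1⟩, -⟩
      apply hball
      rw [Metric.mem_closedBall, Complex.dist_eq]
      have : z + ↑p.1 * Complex.exp (↑p.2 * Complex.I) - z
          = ↑p.1 * Complex.exp (↑p.2 * Complex.I) := by ring
      rw [this, norm_mul, Complex.norm_exp_ofReal_mul_I, mul_one, Complex.norm_real, Real.norm_eq_abs,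
        abs_of_nonneg h0]
      exact h1
    have hFcont : ContinuousOn F (Set.Icc (0:ℝ) ρ ×ˢ Set.Icc (-Real.pi) Real.pi) := by
      apply (continuous_fst.continuousOn).mul
      exact hcont.comp hm.continuousOn hmapsto
    have hFint : IntegrableOn F (Set.Ioc 0 ρ ×ˢ Set.Ioo (-Real.pi) Real.pi)
        (volume.prod volume) := by
      have h1 : IntegrableOn F (Set.Icc (0:ℝ) ρ ×ˢ Set.Icc (-Real.pi) Real.pi) :=
        hFcont.integrableOn_compact (isCompact_Icc.prod isCompact_Icc)
      have h2 : Set.Ioc (0:ℝ) ρ ×ˢ Set.Ioo (-Real.pi) Real.pi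
          ⊆ Set.Icc (0:ℝ) ρ ×ˢ Set.Icc (-Real.pi) Real.pi :=
        Set.prod_mono Set.Ioc_subset_Icc_self Set.Ioo_subset_Icc_self
      rw [← Measure.volume_eq_prod]
      exact h1.mono_set h2
    -- Fubini
    have e5 : (∫ p in Set.Ioc 0 ρ ×ˢ Set.Ioo (-Real.pi) Real.pi, F p)
        = ∫ r in Set.Ioc (0:ℝ) ρ, ∫ θ in Set.Ioo (-Real.pi) Real.pi, F (r, θ) := by
      rw [Measure.volume_eq_prod]
      exact setIntegral_prod F hFint
    -- inner integral lower bound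
    have inner_eq : ∀ r : ℝ, 0 < r → r ≤ ρ →
        (∫ θ in Set.Ioo (-Real.pi) Real.pi, F (r, θ))
          = r * ∫ θ in (0:ℝ)..(2 * Real.pi), g (z + r * Complex.exp (θ * Complex.I)) := by
      intro r hr hrρ
      have hper : Function.Periodic
          (fun θ : ℝ => g (z + ↑r * Complex.exp (↑θ * Complex.I))) (2 * Real.pi) := by
        intro θ
        have : ((θ + 2 * Real.pi : ℝ) : ℂ) * Complex.I
            = ↑θ * Complex.I + 2 * ↑Real.pi * Complex.I := by push_cast; ring
        simp only [this, Complex.exp_add, Complex.exp_two_pi_mul_I, mul_one]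
      have hper2 := hper.intervalIntegral_add_eq (-Real.pi) 0
      have hle : -Real.pi ≤ Real.pi := by linarith
      calc (∫ θ in Set.Ioo (-Real.pi) Real.pi, F (r, θ))
          = ∫ θ in Set.Ioc (-Real.pi) Real.pi,
              r * g (z + ↑r * Complex.exp (↑θ * Complex.I)) := by
            rw [← integral_Ioc_eq_integral_Ioo]
        _ = ∫ θ in (-Real.pi)..Real.pi,
              r * g (z + ↑r * Complex.exp (↑θ * Complex.I)) := by
            rw [intervalIntegral.integral_of_le hle]
        _ = r * ∫ θ in (-Real.pi)..Real.pi, g (z + ↑r * Complex.exp (↑θ * Complex.I)) := by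
            rw [intervalIntegral.integral_const_mul]
        _ = r * ∫ θ in (0:ℝ)..(2 * Real.pi), g (z + ↑r * Complex.exp (↑θ * Complex.I)) := by
            congr 1
            have h1 : -Real.pi + 2 * Real.pi = Real.pi := by ring
            have h2 : (0:ℝ) + 2 * Real.pi = 2 * Real.pi := by ring
            rw [h1, h2] at hper2
            exact hper2
    -- outer integral lower bound
    have houter_int : IntegrableOn
        (fun r => ∫ θ in Set.Ioo (-Real.pi) Real.pi, F (r, θ)) (Set.Ioc (0:ℝ) ρ) := by
      have h := hFint
      rw [IntegrableOn, ← Measure.prod_restrict] at h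
      exact h.integral_prod_left
    have hlhs_int : IntegrableOn (fun r : ℝ => 2 * Real.pi * g z * r) (Set.Ioc (0:ℝ) ρ) :=
      (continuous_const.mul continuous_id).integrableOn_Ioc
    have hmono : ∫ r in Set.Ioc (0:ℝ) ρ, 2 * Real.pi * g z * r
        ≤ ∫ r in Set.Ioc (0:ℝ) ρ, ∫ θ in Set.Ioo (-Real.pi) Real.pi, F (r, θ) := by
      apply setIntegral_mono_on hlhs_int houter_int measurableSet_Ioc
      intro r hr
      rw [inner_eq r hr.1 hr.2]
      have hk := key r hr.1 hr.2
      calc 2 * Real.pi * g z * r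
          = r * (2 * Real.pi * g z) := by ring
        _ ≤ r * ∫ θ in (0:ℝ)..(2 * Real.pi), g (z + r * Complex.exp (θ * Complex.I)) :=
            mul_le_mul_of_nonneg_left hk hr.1.le
    have hlhs_val : ∫ r in Set.Ioc (0:ℝ) ρ, 2 * Real.pi * g z * r
        = Real.pi * ρ ^ 2 * g z := by
      rw [← intervalIntegral.integral_of_le hρpos.le, intervalIntegral.integral_const_mul,
        integral_id]
      ring
    calc Real.pi * ρ ^ 2 * g z
        = ∫ r in Set.Ioc (0:ℝ) ρ, 2 * Real.pi * g z * r := hlhs_val.symm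
      _ ≤ ∫ r in Set.Ioc (0:ℝ) ρ, ∫ θ in Set.Ioo (-Real.pi) Real.pi, F (r, θ) := hmono
      _ = ∫ p in Set.Ioc 0 ρ ×ˢ Set.Ioo (-Real.pi) Real.pi, F p := e5.symm
      _ = ∫ p in polarCoord.target ∩ {p : ℝ × ℝ | |p.1| ≤ ρ},
            p.1 * g (z + ↑p.1 * Complex.exp (↑p.2 * Complex.I)) := by rw [hseteq]
      _ = ∫ p in polarCoord.target, p.1 • f (Complex.polarCoord.symm p) := e4.symm
      _ = ∫ w, f w := e2
      _ = ∫ w in Metric.closedBall z ρ, g w := e1.symm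
  -- compare with the weighted integral
  have hAmeas : MeasurableSet A := by
    have : A = (fun w : ℂ => ‖w‖) ⁻¹' Set.Ioo 0 R := by
      ext w; simp [hA_def, Set.mem_Ioo]
    rw [this]
    exact (measurableSet_Ioo).preimage continuous_norm.measurable
  have hint_cb : IntegrableOn (fun w : ℂ => g w / ‖w‖ ^ 2)
      (Metric.closedBall z ρ) := hint.mono_set hball
  have bound1 : ∫ w in Metric.closedBall z ρ, g w
      ≤ ∫ w in Metric.closedBall z ρ, 9 * ρ ^ 2 * (g w / ‖w‖ ^ 2) := by
    apply setIntegral_mono_on hgint_cb (hint_cb.const_mul _) measurableSet_closedBall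
    intro w hw
    obtain ⟨hlo, hhi⟩ := hcb_bounds w hw
    have hwpos : 0 < ‖w‖ := lt_of_lt_of_le hρpos hlo
    have hgw : 0 < g w := hpos w hwpos (hball hw).2
    have hcancel : g w / ‖w‖ ^ 2 * ‖w‖ ^ 2 = g w :=
      div_mul_cancel₀ _ (pow_ne_zero 2 hwpos.ne')
    have hsq : ‖w‖ ^ 2 ≤ 9 * ρ ^ 2 := by nlinarith
    have hdivnn : 0 ≤ g w / ‖w‖ ^ 2 := div_nonneg hgw.le (by positivity)
    nlinarith [mul_le_mul_of_nonneg_left hsq hdivnn]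
  have bound2 : ∫ w in Metric.closedBall z ρ, g w / ‖w‖ ^ 2
      ≤ ∫ w in A, g w / ‖w‖ ^ 2 := by
    apply setIntegral_mono_set hint
    · refine (ae_restrict_iff' hAmeas).2 (ae_of_all _ fun w hw => ?_)
      exact div_nonneg (hpos w hw.1 hw.2).le (by positivity)
    · exact HasSubset.Subset.eventuallyLE hball
  -- put everything together
  set I : ℝ := ∫ w in A, g w / ‖w‖ ^ 2 with hI_def
  have chain : Real.pi * ρ ^ 2 * g z ≤ 9 * ρ ^ 2 * I := by
    calc Real.pi * ρ ^ 2 * g z ≤ ∫ w in Metric.closedBall z ρ, g w := polar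
      _ ≤ ∫ w in Metric.closedBall z ρ, 9 * ρ ^ 2 * (g w / ‖w‖ ^ 2) := bound1
      _ = 9 * ρ ^ 2 * ∫ w in Metric.closedBall z ρ, g w / ‖w‖ ^ 2 := by
          rw [integral_const_mul]
      _ ≤ 9 * ρ ^ 2 * I := by
          exact mul_le_mul_of_nonneg_left bound2 (by positivity)
  have hgoal : g z ≤ 9 / Real.pi * I := by
    have hfac : (0:ℝ) < Real.pi * ρ ^ 2 := by positivity
    rw [← mul_le_mul_iff_of_pos_right hfac]
    calc g z * (Real.pi * ρ ^ 2) = Real.pi * ρ ^ 2 * g z := by ring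
      _ ≤ 9 * ρ ^ 2 * I := chain
      _ = 9 / Real.pi * I * (Real.pi * ρ ^ 2) := by field_simp
  exact hgoal
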